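/- arXiv:2601.23245 — 3 statements merged into one kernel-verified Lean document; each statement's English description precedes it below -/
import Mathlib

section
/- Take m = 1 (so D = n−1, N = n, η = x_1^n, ∂f = ∂f/∂x_1). Then for every k with 1 ≤ k ≤ n, ∇(p_k) − (−1)^{n−1}·p_k ∈ I². -/
open MvPolynomial Finset

noncomputable section

abbrev Rn (n : ℕ) : Type := MvPolynomial (Fin n) ℚ
abbrev Kn (n : ℕ) : Type := FractionRing (Rn n)

/-- The canonical map from `R = ℚ[x_1,…,x_n]` to its fraction field. -/
def toK {n : ℕ} (f : Rn n) : Kn n := algebraMap (Rn n) (Kn n) f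

/-- `𝔯 = (−1)^D ∏_{i=1}^m ∏_{j=m+1}^n (x_i − x_j)` where `D = m(n−m)`. -/
def frakr (n m : ℕ) : Rn n :=
  ((-1 : ℚ) ^ (m * (n - m))) •
    (∏ i ∈ univ.filter (fun i : Fin n => (i : ℕ) < m),
      ∏ j ∈ univ.filter (fun j : Fin n => m ≤ (j : ℕ)), (X i - X j))

/-- `η = (x_1 + ⋯ + x_m)^N` where `N = m(n−m)+1`. -/
def etaA (n m : ℕ) : Rn n :=
  (∑ i ∈ univ.filter (fun i : Fin n => (i : ℕ) < m), X i) ^ (m * (n - m) + 1)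

/-- `∂f = Σ_{i=1}^m ∂f/∂x_i`. -/
def pdA (n m : ℕ) (f : Rn n) : Rn n :=
  ∑ i ∈ univ.filter (fun i : Fin n => (i : ℕ) < m), pderiv i f

/-- `∫f = (1/(m!(n−m)!)) Σ_{w ∈ S_n} w(f/𝔯)`, computed in the fraction field,
using `w(f/𝔯) = w(f)/w(𝔯)`. -/
def intA (n m : ℕ) (f : Rn n) : Kn n :=
  ((m.factorial * (n - m).factorial : ℕ) : Kn n)⁻¹ *
    ∑ w : Equiv.Perm (Fin n),
      toK (rename (⇑w) f) / toK (rename (⇑w) (frakr n m))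

/-- `∇(f) = ∫(η·∂f)`. -/
def nablaA (n m : ℕ) (f : Rn n) : Kn n := intA n m (etaA n m * pdA n m f)

/-- The ring `R^{S_n}` of symmetric polynomials. -/
def symAlg (n : ℕ) : Subalgebra ℚ (Rn n) := symmetricSubalgebra (Fin n) ℚ

/-- The ideal `I ⊂ R^{S_n}` of symmetric polynomials with zero constant term. -/
def augA (n : ℕ) : Ideal ↥(symAlg n) :=
  RingHom.ker ((constantCoeff : Rn n →+* ℚ).comp (symAlg n).val.toRingHom)

set_option synthInstance.maxHeartbeats 1000000
set_option maxHeartbeats 1000000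

namespace Stmt1Aux

/-- complete homogeneous symmetric polynomials, defined by the esymm recurrence -/
def gA (n : ℕ) : ℕ → Rn n
  | 0 => 1
  | (k+1) => ∑ m ∈ Finset.range (min (k+1) n),
      ((-1:ℚ)^m) • (esymm (Fin n) ℚ (m+1) * gA n (k - m))
  decreasing_by exact Nat.lt_succ_of_le (Nat.sub_le k m)

lemma gA_zero (n : ℕ) : gA n 0 = 1 := by rw [gA]

lemma gA_succ (n k : ℕ) : gA n (k+1) = ∑ m ∈ Finset.range (min (k+1) n),
      ((-1:ℚ)^m) • (esymm (Fin n) ℚ (m+1) * gA n (k - m)) := by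
  rw [gA]

lemma gA_symm (n : ℕ) : ∀ k, (gA n k).IsSymmetric := by
  intro k
  induction k using Nat.strong_induction_on with
  | _ k ih =>
    match k with
    | 0 => exact fun e => by simp [gA_zero]
    | (k+1) =>
      rw [gA_succ]
      intro e
      rw [map_sum]
      refine Finset.sum_congr rfl fun m _ => ?_
      rw [map_smul, map_mul, esymm_isSymmetric _ _ _ e,
        ih (k - m) (Nat.lt_succ_of_le (Nat.sub_le k m)) e]

lemma constantCoeff_esymm (n j : ℕ) (hj : 1 ≤ j) :
    constantCoeff (esymm (Fin n) ℚ j) = 0 := by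
  rw [esymm, map_sum]
  refine Finset.sum_eq_zero fun t ht => ?_
  rw [map_prod]
  have htne : t.Nonempty := by
    rw [Finset.mem_powersetCard] at ht
    exact Finset.card_pos.mp (ht.2 ▸ hj)
  obtain ⟨i, hi⟩ := htne
  exact Finset.prod_eq_zero hi (by simp)

lemma constantCoeff_gA (n : ℕ) (k : ℕ) (hk : 1 ≤ k) :
    constantCoeff (gA n k) = 0 := by
  obtain ⟨k, rfl⟩ := Nat.exists_eq_add_of_le hk
  rw [Nat.add_comm, gA_succ, map_sum]
  refine Finset.sum_eq_zero fun m _ => ?_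
  rw [smul_eq_C_mul, map_mul, map_mul, constantCoeff_esymm n (m+1) (Nat.le_add_left 1 m)]
  simp


lemma vieta_key (n : ℕ) (hn : 1 ≤ n) (i : Fin n) :
    (X i : Rn n) ^ n =
      ∑ m ∈ Finset.range n, ((-1:ℚ)^m) • (esymm (Fin n) ℚ (m+1) * X i ^ (n - 1 - m)) := by
  classical
  set v : Fin n → Rn n := fun j => X j with hv
  set P : Polynomial (Rn n) := Lagrange.nodal Finset.univ v with hP
  have hdeg : P.natDegree = n := by
    rw [hP, Lagrange.natDegree_nodal, Finset.card_univ, Fintype.card_fin]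
  have heval : P.eval (X i) = 0 := by
    rw [hP, Lagrange.eval_nodal]
    exact Finset.prod_eq_zero (Finset.mem_univ i) (by simp [hv])
  have hcoeff : ∀ l, l ≤ n → P.coeff l =
      ((-1 : Rn n)) ^ (n - l) * esymm (Fin n) ℚ (n - l) := by
    intro l hl
    have h1 : P = ((Finset.univ.val.map v).map fun t => Polynomial.X - Polynomial.C t).prod := by
      rw [hP, Lagrange.nodal_eq, Finset.prod, Multiset.map_map]
      rfl
    have hcard : Multiset.card (Finset.univ.val.map v) = n := by simp
    rw [h1, Multiset.prod_X_sub_C_coeff _ (by rw [hcard]; exact hl), hcard]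
    congr 1
    rw [esymm_eq_multiset_esymm]
  have hsum : P.eval (X i) = ∑ l ∈ Finset.range (n+1), P.coeff l * (X i) ^ l := by
    rw [Polynomial.eval_eq_sum_range' (by omega : P.natDegree < n + 1) (X i)]
  rw [heval] at hsum
  rw [Finset.sum_range_succ] at hsum
  have hlast : P.coeff n * (X i : Rn n) ^ n = (X i) ^ n := by
    rw [hcoeff n le_rfl]; simp
  rw [hlast] at hsum
  have hmain : (X i : Rn n) ^ n = -∑ l ∈ Finset.range n, P.coeff l * (X i) ^ l := by
    linear_combination -hsum
  rw [hmain, ← Finset.sum_range_reflect (fun l => P.coeff l * (X i : Rn n) ^ l) n, ← Finset.sum_neg_distrib]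
  refine Finset.sum_congr rfl fun m hm => ?_
  rw [Finset.mem_range] at hm
  rw [hcoeff (n - 1 - m) (by omega)]
  have h2 : n - (n - 1 - m) = m + 1 := by omega
  rw [h2, smul_eq_C_mul]
  have h3 : (C ((-1:ℚ)^m) : Rn n) = (-1 : Rn n)^m := by simp
  rw [h3, pow_succ]
  ring


def vK (n : ℕ) (i : Fin n) : Kn n := toK (X i)

def dK (n : ℕ) (i : Fin n) : Kn n := ∏ j ∈ Finset.univ.erase i, (vK n i - vK n j)

def qK (n : ℕ) (r : ℕ) : Kn n := ∑ i, vK n i ^ r * (dK n i)⁻¹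

lemma toK_injective (n : ℕ) : Function.Injective (toK (n := n)) :=
  IsFractionRing.injective (Rn n) (Kn n)

lemma toK_one (n : ℕ) : toK (1 : Rn n) = 1 := map_one (algebraMap (Rn n) (Kn n))
lemma toK_mul {n : ℕ} (a b : Rn n) : toK (a * b) = toK a * toK b := map_mul (algebraMap (Rn n) (Kn n)) a b
lemma toK_pow {n : ℕ} (a : Rn n) (r : ℕ) : toK (a ^ r) = toK a ^ r := map_pow (algebraMap (Rn n) (Kn n)) a r
lemma toK_sum {n : ℕ} {α : Type*} (s : Finset α) (f : α → Rn n) :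
    toK (∑ i ∈ s, f i) = ∑ i ∈ s, toK (f i) := map_sum (algebraMap (Rn n) (Kn n)) f s

lemma vK_injective (n : ℕ) : Function.Injective (vK n) :=
  (toK_injective n).comp (X_injective)

lemma dK_ne_zero (n : ℕ) (i : Fin n) : dK n i ≠ 0 := by
  rw [dK]
  refine Finset.prod_ne_zero_iff.mpr fun j hj => ?_
  rw [sub_ne_zero]
  exact fun h => (Finset.ne_of_mem_erase hj).symm (vK_injective n h)

lemma coeff_basis (n : ℕ) (i : Fin n) :
    (Lagrange.basis Finset.univ (vK n) i).coeff (n - 1) = (dK n i)⁻¹ := by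
  classical
  have hinj : Set.InjOn (vK n) ↑(Finset.univ : Finset (Fin n)) := fun a _ b _ h => vK_injective n h
  have hdeg : (Lagrange.basis Finset.univ (vK n) i).natDegree = n - 1 := by
    rw [Lagrange.natDegree_basis hinj (Finset.mem_univ i), Finset.card_univ, Fintype.card_fin]
  rw [← hdeg, Polynomial.coeff_natDegree]
  rw [Lagrange.basis, Polynomial.leadingCoeff_prod]
  rw [dK, ← Finset.prod_inv_distrib]
  refine Finset.prod_congr rfl fun j hj => ?_
  have hne : vK n i ≠ vK n j := fun h => (Finset.ne_of_mem_erase hj).symm (vK_injective n h)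
  rw [Lagrange.basisDivisor, Polynomial.leadingCoeff_mul, Polynomial.leadingCoeff_C,
    (Polynomial.monic_X_sub_C (vK n j)).leadingCoeff, mul_one]

lemma qK_eq_coeff (n : ℕ) (r : ℕ) :
    qK n r = (Lagrange.interpolate Finset.univ (vK n) (fun i => vK n i ^ r)).coeff (n - 1) := by
  rw [Lagrange.interpolate_apply, Polynomial.finset_sum_coeff, qK]
  refine Finset.sum_congr rfl fun i _ => ?_
  rw [Polynomial.coeff_C_mul, coeff_basis]

lemma qK_low (n : ℕ) (hn : 1 ≤ n) (r : ℕ) (hr : r ≤ n - 1) :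
    qK n r = if r = n - 1 then 1 else 0 := by
  classical
  have hinj : Set.InjOn (vK n) ↑(Finset.univ : Finset (Fin n)) := fun a _ b _ h => vK_injective n h
  have hint : Lagrange.interpolate Finset.univ (vK n) (fun i => vK n i ^ r)
      = Polynomial.X ^ r := by
    have hd : (Polynomial.X ^ r : Polynomial (Kn n)).degree < (Finset.univ : Finset (Fin n)).card := by
      rw [Polynomial.degree_X_pow, Finset.card_univ, Fintype.card_fin]
      exact_mod_cast (by omega : r < n)
    have := Lagrange.eq_interpolate hinj hd
    rw [show (fun i => vK n i ^ r) = (fun i => Polynomial.eval (vK n i) (Polynomial.X ^ r)) from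
      funext fun i => by simp, ← this]
  rw [qK_eq_coeff, hint, Polynomial.coeff_X_pow]
  simp only [eq_comm]

lemma qK_rec (n : ℕ) (hn : 1 ≤ n) (k : ℕ) :
    qK n (n + k) = ∑ m ∈ Finset.range n,
      toK (((-1:ℚ)^m) • esymm (Fin n) ℚ (m+1)) * qK n (n - 1 - m + k) := by
  classical
  have key : ∀ i : Fin n, vK n i ^ (n + k) =
      ∑ m ∈ Finset.range n, toK (((-1:ℚ)^m) • esymm (Fin n) ℚ (m+1)) * vK n i ^ (n - 1 - m + k) := by
    intro i
    have := congrArg (fun f : Rn n => toK (f * X i ^ k)) (vieta_key n hn i)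
    rw [← pow_add] at this
    calc vK n i ^ (n + k) = toK (X i ^ (n + k)) := (toK_pow _ _).symm
    _ = toK ((∑ m ∈ Finset.range n, ((-1:ℚ)^m) • (esymm (Fin n) ℚ (m+1) * X i ^ (n - 1 - m))) * X i ^ k) := this
    _ = _ := by
        rw [Finset.sum_mul, toK_sum]
        refine Finset.sum_congr rfl fun m _ => ?_
        rw [smul_mul_assoc, mul_assoc, ← pow_add, smul_eq_C_mul, smul_eq_C_mul,
          toK_mul, toK_mul, toK_mul, toK_pow]
        rw [vK]
        ring
  rw [qK, Finset.sum_congr rfl (fun i _ => by rw [key i, Finset.sum_mul]), Finset.sum_comm]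
  refine Finset.sum_congr rfl fun m _ => ?_
  rw [qK, Finset.mul_sum]
  refine Finset.sum_congr rfl fun i _ => ?_
  ring

lemma qK_gA (n : ℕ) (hn : 1 ≤ n) : ∀ k, qK n (n - 1 + k) = toK (gA n k) := by
  intro k
  induction k using Nat.strong_induction_on with
  | _ k ih =>
    match k with
    | 0 => rw [Nat.add_zero, qK_low n hn (n-1) le_rfl, if_pos rfl, gA_zero, toK_one]
    | (k+1) =>
      have h1 : n - 1 + (k + 1) = n + k := by omega
      rw [h1, qK_rec n hn k, gA_succ, toK_sum]
      have hsplit : Finset.range n =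
          Finset.range (min (k+1) n) ∪ (Finset.range n \ Finset.range (min (k+1) n)) := by
        rw [Finset.union_sdiff_of_subset (Finset.range_subset_range.mpr (min_le_right _ _))]
      rw [hsplit, Finset.sum_union (Finset.disjoint_sdiff)]
      have hz : ∑ m ∈ Finset.range n \ Finset.range (min (k+1) n),
          toK (((-1:ℚ)^m) • esymm (Fin n) ℚ (m+1)) * qK n (n - 1 - m + k) = 0 := by
        refine Finset.sum_eq_zero fun m hm => ?_
        rw [Finset.mem_sdiff, Finset.mem_range, Finset.mem_range] at hm
        have hm1 : k + 1 ≤ m := by omega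
        have hm2 : m < n := hm.1
        rw [qK_low n hn _ (by omega), if_neg (by omega)]
        ring
      rw [hz, add_zero]
      refine Finset.sum_congr rfl fun m hm => ?_
      rw [Finset.mem_range] at hm
      have hm1 : m ≤ k := by omega
      have hm2 : m < n := by omega
      have h2 : n - 1 - m + k = n - 1 + (k - m) := by omega
      rw [h2, ih (k - m) (Nat.lt_succ_of_le (Nat.sub_le k m)), smul_eq_C_mul, smul_eq_C_mul,
        toK_mul, toK_mul, toK_mul, mul_assoc]


def DR (n : ℕ) (i : Fin n) : Rn n := ∏ j ∈ Finset.univ.erase i, (X i - X j)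

lemma toK_DR (n : ℕ) (i : Fin n) : toK (DR n i) = dK n i := by
  rw [DR, dK, toK, map_prod]
  exact Finset.prod_congr rfl fun j _ => by rw [map_sub]; rfl

lemma toK_smul {n : ℕ} (q : ℚ) (f : Rn n) : toK (q • f) = toK (C q) * toK f := by
  rw [smul_eq_C_mul, toK_mul]

lemma toK_C_mul {n : ℕ} (a b : ℚ) :
    toK (C (a * b) : Rn n) = toK (C a : Rn n) * toK (C b : Rn n) := by
  rw [map_mul, toK_mul]

lemma rename_DR (n : ℕ) (w : Equiv.Perm (Fin n)) (i : Fin n) :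
    rename (⇑w) (DR n i) = DR n (w i) := by
  rw [DR, DR, map_prod]
  simp only [map_sub, rename_X]
  refine Finset.prod_nbij' (fun j => w j) (fun j => w.symm j) ?_ ?_ ?_ ?_ ?_
  · intro a ha
    simp only [Finset.mem_erase, Finset.mem_univ, and_true] at ha ⊢
    exact fun h => ha (w.injective h)
  · intro a ha
    simp only [Finset.mem_erase, Finset.mem_univ, and_true] at ha ⊢
    exact fun h => ha (by rw [← h, Equiv.apply_symm_apply])
  · intro a _; simp
  · intro a _; simp
  · intro a _; rfl

lemma sum_perm_comp {M : Type*} [AddCommMonoid M] (n' : ℕ) (F : Fin (n'+1) → M) :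
    ∑ w : Equiv.Perm (Fin (n'+1)), F (w 0) = (Nat.factorial n') • ∑ i, F i := by
  rw [← Equiv.sum_comp (Equiv.Perm.decomposeFin).symm (fun w => F (w 0)),
    Fintype.sum_prod_type]
  simp only [Equiv.Perm.decomposeFin_symm_apply_zero]
  rw [Finset.smul_sum]
  refine Finset.sum_congr rfl fun i _ => ?_
  rw [Finset.sum_const, Finset.card_univ, Fintype.card_perm, Fintype.card_fin]

lemma nabla_eq (n k : ℕ) (hn : 2 ≤ n) (hk : 1 ≤ k) :
    nablaA n 1 (∑ i : Fin n, X i ^ k) = toK (((-1:ℚ)^(n-1) * k) • gA n k) := by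
  classical
  obtain ⟨n', rfl⟩ : ∃ n', n = n' + 1 := ⟨n - 1, by omega⟩
  set nn := n' + 1 with hnn
  have h_filter : Finset.univ.filter (fun i : Fin nn => (i : ℕ) < 1) = {0} := by
    ext i
    simp only [Finset.mem_filter, Finset.mem_univ, true_and, Finset.mem_singleton, Fin.ext_iff, Fin.val_zero]
    omega
  have h_filter2 : Finset.univ.filter (fun j : Fin nn => 1 ≤ (j : ℕ)) =
      Finset.univ.erase 0 := by
    ext j
    simp only [Finset.mem_filter, Finset.mem_univ, true_and, Finset.mem_erase, and_true, ne_eq, Fin.ext_iff, Fin.val_zero]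
    omega
  have h_eta : etaA nn 1 = X 0 ^ nn := by
    rw [etaA, h_filter, Finset.sum_singleton]
    congr 1
    omega
  have h_pd : pdA nn 1 (∑ i : Fin nn, X i ^ k) = (k:ℚ) • X (0 : Fin nn) ^ (k-1) := by
    rw [pdA, h_filter, Finset.sum_singleton, map_sum]
    rw [Finset.sum_eq_single 0]
    · rw [pderiv_pow, pderiv_X_self, mul_one, smul_eq_C_mul, map_natCast C k]
    · intro i _ hi
      rw [pderiv_pow, pderiv_X_of_ne hi, mul_zero]
    · intro h
      exact absurd (Finset.mem_univ _) h
  have h_etapd : etaA nn 1 * pdA nn 1 (∑ i : Fin nn, X i ^ k)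
      = (k:ℚ) • X (0 : Fin nn) ^ (n' + k) := by
    rw [h_eta, h_pd, mul_smul_comm, ← pow_add]
    congr 2
    omega
  have h_frakr : frakr nn 1 = ((-1:ℚ)^n') • DR nn 0 := by
    rw [frakr, h_filter, h_filter2, Finset.prod_singleton, DR]
    congr 2
    omega
  have hε : toK (C ((-1:ℚ)^n') : Rn nn) * toK (C ((-1:ℚ)^n') : Rn nn) = 1 := by
    rw [← toK_C_mul, ← pow_add]
    rw [Even.neg_one_pow ⟨n', rfl⟩, map_one, toK_one]
  have hεinv : (toK (C ((-1:ℚ)^n') : Rn nn))⁻¹ = toK (C ((-1:ℚ)^n') : Rn nn) :=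
    inv_eq_of_mul_eq_one_right hε
  have h_summand : ∀ w : Equiv.Perm (Fin nn),
      toK (rename (⇑w) ((k:ℚ) • X (0 : Fin nn) ^ (n' + k))) /
        toK (rename (⇑w) (frakr nn 1)) =
      toK (C ((-1:ℚ)^n' * k) : Rn nn) * (vK nn (w 0) ^ (n' + k) * (dK nn (w 0))⁻¹) := by
    intro w
    rw [h_frakr, map_smul, map_smul, map_pow, rename_X, rename_DR, toK_smul, toK_smul,
      toK_pow, toK_DR]
    rw [div_eq_mul_inv, mul_inv, hεinv, toK_C_mul]
    rw [show (vK nn (w 0)) = toK (X (w 0)) from rfl]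
    ring
  rw [nablaA, h_etapd, intA]
  rw [Finset.sum_congr rfl fun w _ => h_summand w]
  rw [sum_perm_comp n' (fun i => toK (C ((-1:ℚ)^n' * k) : Rn nn) *
    (vK nn i ^ (n' + k) * (dK nn i)⁻¹))]
  have hq : ∑ i, toK (C ((-1:ℚ)^n' * k) : Rn nn) * (vK nn i ^ (n' + k) * (dK nn i)⁻¹)
      = toK (C ((-1:ℚ)^n' * k) : Rn nn) * qK nn (n' + k) := by
    rw [qK, Finset.mul_sum]
  rw [hq]
  have hq2 : qK nn (n' + k) = toK (gA nn k) := by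
    have := qK_gA nn (by omega) k
    rwa [show nn - 1 + k = n' + k from by omega] at this
  rw [hq2]
  have hfact : ((Nat.factorial 1 * Nat.factorial (nn - 1) : ℕ) : Kn nn)
      = (Nat.factorial n' : Kn nn) := by
    norm_num [hnn]
  rw [hfact, nsmul_eq_mul]
  have hfne : ((Nat.factorial n' : ℕ) : Kn nn) ≠ 0 := by
    have h1 : ((Nat.factorial n' : ℕ) : Kn nn) = toK ((Nat.factorial n' : ℕ) : Rn nn) := by
      rw [toK, map_natCast]
    rw [h1]
    intro h
    have := toK_injective nn (h.trans (map_zero (algebraMap (Rn nn) (Kn nn))).symm)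
    exact Nat.factorial_ne_zero n' (by exact_mod_cast this)
  rw [inv_mul_cancel_left₀ hfne]
  rw [toK_smul]
  rw [show nn - 1 = n' from by omega]


def eS (n j : ℕ) : ↥(symAlg n) :=
  ⟨esymm (Fin n) ℚ j, (mem_symmetricSubalgebra _).mpr (esymm_isSymmetric _ _ j)⟩

def gS (n k : ℕ) : ↥(symAlg n) :=
  ⟨gA n k, (mem_symmetricSubalgebra _).mpr (gA_symm n k)⟩

def pS (n k : ℕ) : ↥(symAlg n) :=
  ⟨∑ i : Fin n, X i ^ k, (mem_symmetricSubalgebra _).mpr (psum_isSymmetric (Fin n) ℚ k)⟩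

lemma mem_augA {n : ℕ} (x : ↥(symAlg n)) :
    x ∈ augA n ↔ constantCoeff (x : Rn n) = 0 := by
  rw [augA, RingHom.mem_ker]
  rfl

lemma eS_mem (n j : ℕ) (hj : 1 ≤ j) : eS n j ∈ augA n :=
  (mem_augA _).mpr (constantCoeff_esymm n j hj)

lemma gS_mem (n k : ℕ) (hk : 1 ≤ k) : gS n k ∈ augA n :=
  (mem_augA _).mpr (constantCoeff_gA n k hk)

lemma pS_mem (n k : ℕ) (hk : 1 ≤ k) : pS n k ∈ augA n := by
  refine (mem_augA _).mpr ?_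
  show constantCoeff (∑ i : Fin n, X i ^ k) = 0
  rw [map_sum]
  exact Finset.sum_eq_zero fun i _ => by
    rw [map_pow, constantCoeff_X, zero_pow (by omega)]

lemma smul_mem_sq (n : ℕ) (q : ℚ) {x : ↥(symAlg n)} (hx : x ∈ (augA n)^2) :
    q • x ∈ (augA n)^2 := by
  rw [Algebra.smul_def]
  exact Ideal.mul_mem_left _ _ hx

lemma mul_mem_sq (n : ℕ) {x y : ↥(symAlg n)} (hx : x ∈ augA n) (hy : y ∈ augA n) :
    x * y ∈ (augA n)^2 := by
  rw [sq]
  exact Ideal.mul_mem_mul hx hy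

lemma lemA (n k : ℕ) (hk1 : 1 ≤ k) (hk2 : k ≤ n) :
    gS n k - ((-1:ℚ)^(k-1)) • eS n k ∈ (augA n)^2 := by
  obtain ⟨j, rfl⟩ : ∃ j, k = j + 1 := ⟨k - 1, by omega⟩
  have hmin : min (j + 1) n = j + 1 := by omega
  have hsplit : gS n (j+1) =
      (∑ m ∈ Finset.range j, ((-1:ℚ)^m) • (eS n (m+1) * gS n (j - m))) +
        ((-1:ℚ)^j) • eS n (j+1) := by
    apply Subtype.ext
    push_cast [gS, eS]
    rw [gA_succ, hmin, Finset.sum_range_succ]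
    simp [gA_zero]
  have heq : gS n (j+1) - ((-1:ℚ)^(j+1-1)) • eS n (j+1) =
      ∑ m ∈ Finset.range j, ((-1:ℚ)^m) • (eS n (m+1) * gS n (j - m)) := by
    rw [show j + 1 - 1 = j from rfl, sub_eq_iff_eq_add, hsplit]
  rw [heq]
  refine Ideal.sum_mem _ fun m hm => ?_
  rw [Finset.mem_range] at hm
  refine smul_mem_sq n _ (mul_mem_sq n (eS_mem n (m+1) (by omega)) (gS_mem n (j-m) (by omega)))

lemma lemB (n k : ℕ) (hk1 : 1 ≤ k) :
    pS n k - ((-1:ℚ)^(k-1) * k) • eS n k ∈ (augA n)^2 := by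
  have hnewton := psum_eq_mul_esymm_sub_sum (Fin n) ℚ k (by omega)
  have hsign : ((-1 : Rn n)) ^ (k+1) * (k : Rn n) = C ((-1:ℚ)^(k-1) * k) := by
    rw [map_mul, map_pow, map_neg, map_one, map_natCast,
      show k + 1 = (k - 1) + 2 from by omega, pow_add]
    ring
  have hsplit : pS n k = ((-1:ℚ)^(k-1) * k) • eS n k -
      ∑ a ∈ Finset.HasAntidiagonal.antidiagonal k with a.1 ∈ Set.Ioo 0 k,
        ((-1:ℚ)^a.1) • (eS n a.1 * pS n a.2) := by
    apply Subtype.ext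
    push_cast [pS, eS]
    rw [show (∑ i : Fin n, X i ^ k) = psum (Fin n) ℚ k from rfl, hnewton, smul_eq_C_mul,
      ← hsign, mul_assoc]
    congr 1
    refine Finset.sum_congr rfl fun a _ => ?_
    rw [smul_eq_C_mul, show (C ((-1:ℚ)^a.1) : Rn n) = (-1 : Rn n)^a.1 from by simp,
      ← mul_assoc]
    rfl
  have heq : pS n k - ((-1:ℚ)^(k-1) * k) • eS n k =
      -∑ a ∈ Finset.HasAntidiagonal.antidiagonal k with a.1 ∈ Set.Ioo 0 k,
        ((-1:ℚ)^a.1) • (eS n a.1 * pS n a.2) := by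
    rw [hsplit]
    ring
  rw [heq]
  refine Submodule.neg_mem _ (Ideal.sum_mem _ fun a ha => ?_)
  rw [Finset.mem_filter, Finset.HasAntidiagonal.mem_antidiagonal] at ha
  obtain ⟨hsum, h1, h2⟩ := And.intro ha.1 ha.2
  refine smul_mem_sq n _ (mul_mem_sq n (eS_mem n a.1 (by omega)) (pS_mem n a.2 (by omega)))

end Stmt1Aux

/-- for `m = 1`, `∇(p_k) − (−1)^{n−1}·p_k ∈ I²` for `1 ≤ k ≤ n`. -/
theorem stmt_1 (n : ℕ) (hn : 2 ≤ n) (k : ℕ) (hk1 : 1 ≤ k) (hk2 : k ≤ n) :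
    ∃ g pk : ↥(symAlg n),
      toK (g : Rn n) = nablaA n 1 (∑ i : Fin n, X i ^ k) ∧
      (pk : Rn n) = ∑ i : Fin n, X i ^ k ∧
      g - ((-1 : ℚ) ^ (n - 1)) • pk ∈ (augA n) ^ 2 := by
  refine ⟨((-1:ℚ)^(n-1) * k) • Stmt1Aux.gS n k, Stmt1Aux.pS n k, ?_, rfl, ?_⟩
  · rw [show ((((-1:ℚ)^(n-1) * k) • Stmt1Aux.gS n k : ↥(symAlg n)) : Rn n)
        = ((-1:ℚ)^(n-1) * (k:ℚ)) • Stmt1Aux.gA n k from rfl]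
    exact (Stmt1Aux.nabla_eq n k hn hk1).symm
  · have key : ((-1:ℚ)^(n-1) * k) • Stmt1Aux.gS n k - ((-1:ℚ)^(n-1)) • Stmt1Aux.pS n k
        = ((-1:ℚ)^(n-1)) • ((k:ℚ) •
            (Stmt1Aux.gS n k - ((-1:ℚ)^(k-1)) • Stmt1Aux.eS n k)
          - (Stmt1Aux.pS n k - ((-1:ℚ)^(k-1) * k) • Stmt1Aux.eS n k)) := by
      module
    rw [key]
    exact Stmt1Aux.smul_mem_sq n _ (Submodule.sub_mem _
      (Stmt1Aux.smul_mem_sq n _ (Stmt1Aux.lemA n k hk1 hk2))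
      (Stmt1Aux.lemB n k hk1))

end
end

section
/- Let 1 ≤ m < n and let λ be a partition with at most m parts. Set γ := (λ_1+m−1, λ_2+m−2, …, λ_m, n−m−1, n−m−2, …, 1, 0) ∈ ℕ^n (the concatenation of λ+δ_m with δ_{n−m}). Then in ℚ[x_1,…,x_n]: (1/(m!·(n−m)!)) · Σ_{ρ∈S_n} sgn(ρ)·ρ( a_{λ+δ_m}(x_1,…,x_m) · a_{δ_{n−m}}(x_{m+1},…,x_n) ) = a_γ(x_1,…,x_n), where S_n acts by permuting the variables. -/
open MvPolynomial Finset

noncomputable section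

/-- The alternant `a_α(y) = Σ_{ρ∈S_r} sgn(ρ) ∏_i y_{ρ(i)}^{α_i}`. -/
def alt {n : ℕ} (r : ℕ) (α : Fin r → ℕ) (y : Fin r → Rn n) : Rn n :=
  ∑ ρ : Equiv.Perm (Fin r), ((Equiv.Perm.sign ρ : ℤ)) • ∏ i, y (ρ i) ^ (α i)

/-- for a partition `λ` with at most `m` parts and
`γ = (λ+δ_m) ⌢ δ_{n−m}`, we have
`(1/(m!(n−m)!)) Σ_{ρ∈S_n} sgn(ρ) ρ(a_{λ+δ_m}(x_1,…,x_m)·a_{δ_{n−m}}(x_{m+1},…,x_n))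
  = a_γ(x_1,…,x_n)`. -/
theorem stmt_4 (n m : ℕ) (hm1 : 1 ≤ m) (hm2 : m < n)
    (lam : Fin m → ℕ) (hlam : Antitone lam) :
    ((m.factorial * (n - m).factorial : ℚ))⁻¹ •
      (∑ ρ : Equiv.Perm (Fin n), ((Equiv.Perm.sign ρ : ℤ)) •
        rename (⇑ρ)
          (alt m (fun i => lam i + (m - 1 - (i : ℕ)))
              (fun i => X (Fin.castLE hm2.le i)) *
           alt (n - m) (fun j => n - m - 1 - (j : ℕ))
              (fun j => X (⟨m + (j : ℕ), by have := j.isLt; omega⟩ : Fin n)))) =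
      alt n
        (fun i : Fin n =>
          if h : (i : ℕ) < m then lam ⟨i, h⟩ + (m - 1 - (i : ℕ)) else n - 1 - (i : ℕ))
        (fun i => X i) := by
  classical
  have hmn : m + (n - m) = n := by omega
  set γ : Fin n → ℕ := fun i =>
    if h : (i : ℕ) < m then lam ⟨i, h⟩ + (m - 1 - (i : ℕ)) else n - 1 - (i : ℕ) with hγ
  set equ : (Fin m ⊕ Fin (n - m)) ≃ Fin n := finSumFinEquiv.trans (finCongr hmn) with hequ
  set N : Equiv.Perm (Fin n) → Rn n := fun u => ∏ k, (X (u k) : Rn n) ^ γ k with hN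
  set e : Equiv.Perm (Fin m) → Equiv.Perm (Fin (n - m)) → Equiv.Perm (Fin n) :=
    fun σ τ => equ.permCongr (σ.sumCongr τ) with he
  have hequl : ∀ i : Fin m, equ (Sum.inl i) = Fin.castLE hm2.le i := by
    intro i; ext; simp [hequ]
  have hequr : ∀ j : Fin (n - m),
      equ (Sum.inr j) = (⟨m + (j : ℕ), by omega⟩ : Fin n) := by
    intro j; ext; simp [hequ]
  have heapl : ∀ σ τ (i : Fin m), e σ τ (equ (Sum.inl i)) = equ (Sum.inl (σ i)) := by
    intro σ τ i; simp [he]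
  have heapr : ∀ σ τ (j : Fin (n - m)), e σ τ (equ (Sum.inr j)) = equ (Sum.inr (τ j)) := by
    intro σ τ j; simp [he]
  have hsign : ∀ σ τ, (Equiv.Perm.sign (e σ τ) : ℤ)
      = (Equiv.Perm.sign σ : ℤ) * (Equiv.Perm.sign τ : ℤ) := by
    intro σ τ
    simp [he, Equiv.Perm.sign_permCongr, Equiv.Perm.sign_sumCongr]
  have hγ1 : ∀ (k : Fin n) (h : (k : ℕ) < m),
      γ k = lam ⟨k, h⟩ + (m - 1 - (k : ℕ)) := fun k h => dif_pos h
  have hγ2 : ∀ (k : Fin n), ¬ ((k : ℕ) < m) → γ k = n - 1 - (k : ℕ) :=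
    fun k h => dif_neg h
  have key : ∀ (σ : Equiv.Perm (Fin m)) (τ : Equiv.Perm (Fin (n - m))),
      (∏ i, (X (Fin.castLE hm2.le (σ i)) : Rn n) ^ (lam i + (m - 1 - (i : ℕ)))) *
      (∏ j, (X ((⟨m + ((τ j) : ℕ), by have := (τ j).isLt; omega⟩ : Fin n)) : Rn n)
          ^ (n - m - 1 - (j : ℕ))) = N (e σ τ) := by
    intro σ τ
    have hNrfl : N (e σ τ) = ∏ k : Fin n, (X ((e σ τ) k) : Rn n) ^ γ k := rfl
    rw [hNrfl]
    rw [← Equiv.prod_comp equ (fun k => (X ((e σ τ) k) : Rn n) ^ γ k)]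
    rw [Fintype.prod_sum_type]
    congr 1
    · apply Finset.prod_congr rfl
      intro i _
      rw [heapl, hequl, hequl, hγ1 _ (by simp [i.isLt])]
      simp
    · apply Finset.prod_congr rfl
      intro j _
      rw [heapr, hequr, hequr, hγ2 _ (by simp)]
      congr 1
      simp only [Fin.val_mk]
      omega
  have renameN : ∀ (ρ u : Equiv.Perm (Fin n)), rename (⇑ρ) (N u) = N (ρ * u) := by
    intro ρ u
    rw [hN]
    simp [map_prod, Equiv.Perm.mul_apply]
  have step1 : ∀ ρ : Equiv.Perm (Fin n),
      ((Equiv.Perm.sign ρ : ℤ)) • rename (⇑ρ)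
          (alt m (fun i => lam i + (m - 1 - (i : ℕ)))
              (fun i => X (Fin.castLE hm2.le i)) *
           alt (n - m) (fun j => n - m - 1 - (j : ℕ))
              (fun j => X (⟨m + (j : ℕ), by have := j.isLt; omega⟩ : Fin n))) =
      ∑ σ : Equiv.Perm (Fin m), ∑ τ : Equiv.Perm (Fin (n - m)),
        ((Equiv.Perm.sign (ρ * e σ τ) : ℤ)) • N (ρ * e σ τ) := by
    intro ρ
    rw [alt, alt, Finset.sum_mul_sum]
    rw [map_sum, Finset.smul_sum]
    apply Finset.sum_congr rfl
    intro σ _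
    rw [map_sum, Finset.smul_sum]
    apply Finset.sum_congr rfl
    intro τ _
    rw [smul_mul_smul_comm, map_zsmul, smul_smul]
    rw [key σ τ, renameN]
    congr 1
    rw [map_mul, Units.val_mul, hsign]
  rw [Finset.sum_congr rfl fun ρ _ => step1 ρ]
  rw [Finset.sum_comm]
  have step2 : ∀ σ : Equiv.Perm (Fin m),
      (∑ ρ : Equiv.Perm (Fin n), ∑ τ : Equiv.Perm (Fin (n - m)),
        ((Equiv.Perm.sign (ρ * e σ τ) : ℤ)) • N (ρ * e σ τ)) =
      (Fintype.card (Equiv.Perm (Fin (n - m)))) •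
        ∑ u : Equiv.Perm (Fin n), ((Equiv.Perm.sign u : ℤ)) • N u := by
    intro σ
    rw [Finset.sum_comm]
    have h : ∀ τ : Equiv.Perm (Fin (n - m)),
        (∑ ρ : Equiv.Perm (Fin n), ((Equiv.Perm.sign (ρ * e σ τ) : ℤ)) • N (ρ * e σ τ)) =
        ∑ u : Equiv.Perm (Fin n), ((Equiv.Perm.sign u : ℤ)) • N u := fun τ =>
      Equiv.sum_comp (Equiv.mulRight (e σ τ))
        (fun u => ((Equiv.Perm.sign u : ℤ)) • N u)
    rw [Finset.sum_congr rfl fun τ _ => h τ, Finset.sum_const, Finset.card_univ]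
  rw [Finset.sum_congr rfl fun σ _ => step2 σ]
  rw [Finset.sum_const, Finset.card_univ]
  have hcard1 : Fintype.card (Equiv.Perm (Fin m)) = m.factorial := by
    simp [Fintype.card_perm]
  have hcard2 : Fintype.card (Equiv.Perm (Fin (n - m))) = (n - m).factorial := by
    simp [Fintype.card_perm]
  rw [hcard1, hcard2, smul_smul]
  have halt : alt n γ (fun i => X i) = ∑ u : Equiv.Perm (Fin n),
      ((Equiv.Perm.sign u : ℤ)) • N u := rfl
  rw [← halt]
  rw [← Nat.cast_smul_eq_nsmul ℚ, smul_smul, Nat.cast_mul]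
  rw [inv_mul_cancel₀, one_smul]
  positivity
end
end

section
/- For every n ≥ 2, with ρ_n := (n, n−1, …, 2, 1) and (1^{n−1}) the single-column partition with n−1 boxes: f^{ρ_n/(1^{n−1})} = (C(n,2)+1) · f^{(n−1, n−2, …, 1)}, where C(n,2) = n(n−1)/2. -/
open Finset

noncomputable section

/-- The set of cells of the skew Young diagram `λ/ν` (rows indexed by `Fin n`,
columns 0-indexed): cell `(i, j)` belongs to `λ/ν` iff `ν_i ≤ j < λ_i`. -/
def skewCells (n : ℕ) (lam nu : Fin n → ℕ) : Finset (Fin n × ℕ) :=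
  (univ ×ˢ range (univ.sup lam)).filter (fun c => nu c.1 ≤ c.2 ∧ c.2 < lam c.1)

open scoped Classical in
/-- `fSkew n lam nu` is the number of standard Young tableaux of skew shape
`λ/ν`: bijective fillings of the cells of `λ/ν` by `{1, …, |λ|−|ν|}` (here
realized as `Fin M` with `M = Σ_i (λ_i − ν_i)`), strictly increasing along each
row and strictly increasing down each column. Taking `ν = 0` gives the number
`f^λ` of standard Young tableaux of shape `λ`. -/
def fSkew (n : ℕ) (lam nu : Fin n → ℕ) : ℕ :=
  Fintype.card
    {T : ↥(skewCells n lam nu) → Fin (∑ i, (lam i - nu i)) //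
      Function.Bijective T ∧
      (∀ c c' : ↥(skewCells n lam nu),
        (c : Fin n × ℕ).1 = (c' : Fin n × ℕ).1 →
        (c : Fin n × ℕ).2 < (c' : Fin n × ℕ).2 → T c < T c') ∧
      (∀ c c' : ↥(skewCells n lam nu),
        (c : Fin n × ℕ).2 = (c' : Fin n × ℕ).2 →
        (c : Fin n × ℕ).1 < (c' : Fin n × ℕ).1 → T c < T c')}

namespace Stmt15

lemma mem_skewCells {n : ℕ} {lam nu : Fin n → ℕ} {c : Fin n × ℕ} :
    c ∈ skewCells n lam nu ↔ nu c.1 ≤ c.2 ∧ c.2 < lam c.1 := by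
  unfold skewCells
  simp only [Finset.mem_filter, Finset.mem_product, Finset.mem_univ, true_and, Finset.mem_range]
  exact ⟨fun h => h.2, fun h => ⟨lt_of_lt_of_le h.2 (Finset.le_sup (Finset.mem_univ c.1)), h⟩⟩

variable (m : ℕ)

abbrev Am : Finset (Fin (m+2) × ℕ) :=
  skewCells (m+2) (fun i => m + 2 - (i:ℕ)) (fun i => if (i:ℕ) < m + 1 then 1 else 0)

abbrev Bm : Finset (Fin (m+1) × ℕ) :=
  skewCells (m+1) (fun i => m + 1 - (i:ℕ)) (fun _ => 0)

def sp : ↥(Am m) :=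
  ⟨(⟨m+1, by omega⟩, 0), by rw [mem_skewCells]; simp⟩

lemma row_lt (a : ↥(Am m)) (h : a ≠ sp m) :
    (a : Fin (m+2) × ℕ).1.1 < m + 1 ∧ 1 ≤ (a : Fin (m+2) × ℕ).2 := by
  obtain ⟨⟨⟨i, hi⟩, j⟩, ha⟩ := a
  rw [mem_skewCells] at ha
  simp only at ha ⊢
  by_cases hc : i < m + 1
  · rw [if_pos hc] at ha; exact ⟨hc, ha.1⟩
  · exfalso
    have hi' : i = m + 1 := by omega
    apply h
    apply Subtype.ext
    have hj : j = 0 := by rw [if_neg hc] at ha; omega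
    subst hi' hj
    rfl

def up (b : ↥(Bm m)) : ↥(Am m) :=
  ⟨(⟨(b : Fin (m+1) × ℕ).1.1, by omega⟩, (b : Fin (m+1) × ℕ).2 + 1), by
    have hb := mem_skewCells.1 b.2
    have h1 : (b : Fin (m+1) × ℕ).1.1 < m + 1 := (b : Fin (m+1) × ℕ).1.2
    rw [mem_skewCells]
    constructor
    · simp only [h1, if_pos]; omega
    · simp only at hb ⊢; omega⟩

def down (a : ↥(Am m)) : ↥(Bm m) :=
  ⟨(⟨min (a : Fin (m+2) × ℕ).1.1 m, by omega⟩, (a : Fin (m+2) × ℕ).2 - 1), by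
    have ha := mem_skewCells.1 a.2
    have h2 : (a : Fin (m+2) × ℕ).1.1 < m + 2 := (a : Fin (m+2) × ℕ).1.2
    rw [mem_skewCells]
    refine ⟨Nat.zero_le _, ?_⟩
    simp only at ha ⊢
    by_cases hc : (a : Fin (m+2) × ℕ).1.1 < m + 1
    · rw [if_pos hc] at ha; omega
    · rw [if_neg hc] at ha; omega⟩

lemma down_up (b : ↥(Bm m)) : down m (up m b) = b := by
  have h1 : (b : Fin (m+1) × ℕ).1.1 < m + 1 := (b : Fin (m+1) × ℕ).1.2
  apply Subtype.ext
  apply Prod.ext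
  · apply Fin.ext; simp only [down, up]; omega
  · simp [down, up]

lemma up_down (a : ↥(Am m)) (h : a ≠ sp m) : up m (down m a) = a := by
  obtain ⟨hr, hj⟩ := row_lt m a h
  apply Subtype.ext
  apply Prod.ext
  · apply Fin.ext; simp only [up, down]; omega
  · simp only [up, down]; omega

lemma up_ne_sp (b : ↥(Bm m)) : up m b ≠ sp m := by
  intro h
  have := congrArg (fun x : ↥(Am m) => (x : Fin (m+2) × ℕ).2) h
  simp [up, sp] at this
abbrev Cond {r : ℕ} (S : Finset (Fin r × ℕ)) {N : ℕ} (T : ↥S → Fin N) : Prop :=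
  Function.Bijective T ∧
  (∀ c c' : ↥S, (c : Fin r × ℕ).1 = (c' : Fin r × ℕ).1 →
    (c : Fin r × ℕ).2 < (c' : Fin r × ℕ).2 → T c < T c') ∧
  (∀ c c' : ↥S, (c : Fin r × ℕ).2 = (c' : Fin r × ℕ).2 →
    (c : Fin r × ℕ).1 < (c' : Fin r × ℕ).1 → T c < T c')

variable {m} {N : ℕ}

def Fmap (T : ↥(Am m) → Fin (N+1)) (hinj : Function.Injective T) : ↥(Bm m) → Fin N :=
  fun b => (finSuccAboveOrderIso (T (sp m))).symm
    ⟨T (up m b), fun h => up_ne_sp m b (hinj h)⟩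

def Gmap (k : Fin (N+1)) (T' : ↥(Bm m) → Fin N) : ↥(Am m) → Fin (N+1) :=
  fun a => if a = sp m then k else (k.succAbove (T' (down m a)))

lemma Fmap_succAbove (T : ↥(Am m) → Fin (N+1)) (hinj : Function.Injective T) (b : ↥(Bm m)) :
    (T (sp m)).succAbove (Fmap T hinj b) = T (up m b) := by
  have h := (finSuccAboveOrderIso (T (sp m))).apply_symm_apply
    ⟨T (up m b), fun h => up_ne_sp m b (hinj h)⟩
  have h2 := congrArg Subtype.val h
  rwa [finSuccAboveOrderIso_apply] at h2

lemma Gmap_sp (k : Fin (N+1)) (T' : ↥(Bm m) → Fin N) : Gmap k T' (sp m) = k := if_pos rfl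

lemma Gmap_ne (k : Fin (N+1)) (T' : ↥(Bm m) → Fin N) (a : ↥(Am m)) (h : a ≠ sp m) :
    Gmap k T' a = k.succAbove (T' (down m a)) := if_neg h
lemma cond_Fmap (T : ↥(Am m) → Fin (N+1)) (hT : Cond (Am m) T) :
    Cond (Bm m) (Fmap T hT.1.1) := by
  refine ⟨⟨?_, ?_⟩, ?_, ?_⟩
  · intro b1 b2 h
    have h2 := congrArg ((T (sp m)).succAbove) h
    rw [Fmap_succAbove, Fmap_succAbove] at h2
    have h3 := congrArg (down m) (hT.1.1 h2)
    rwa [down_up, down_up] at h3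
  · intro v
    obtain ⟨a, ha⟩ := hT.1.2 ((T (sp m)).succAbove v)
    have hane : a ≠ sp m := by
      intro h; rw [h] at ha; exact Fin.succAbove_ne (T (sp m)) v ha.symm
    refine ⟨down m a, Fin.succAbove_right_injective (p := T (sp m)) ?_⟩
    rw [Fmap_succAbove, up_down m a hane, ha]
  · intro c c' h1 h2
    rw [← Fin.succAbove_lt_succAbove_iff (p := T (sp m)), Fmap_succAbove, Fmap_succAbove]
    apply hT.2.1
    · apply Fin.ext
      simp only [up]
      exact congrArg Fin.val h1
    · simp only [up]
      omega
  · intro c c' h1 h2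
    rw [← Fin.succAbove_lt_succAbove_iff (p := T (sp m)), Fmap_succAbove, Fmap_succAbove]
    apply hT.2.2
    · simp only [up]
      omega
    · have h2' := Fin.lt_def.1 h2
      rw [Fin.lt_def]
      simp only [up]
      exact h2'

lemma cond_Gmap (k : Fin (N+1)) (T' : ↥(Bm m) → Fin N) (hT' : Cond (Bm m) T') :
    Cond (Am m) (Gmap k T') := by
  refine ⟨⟨?_, ?_⟩, ?_, ?_⟩
  · intro a1 a2 h
    by_cases h1 : a1 = sp m <;> by_cases h2 : a2 = sp m
    · rw [h1, h2]
    · rw [h1, Gmap_sp, Gmap_ne _ _ _ h2] at h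
      exact absurd h.symm (Fin.succAbove_ne k _)
    · rw [h2, Gmap_sp, Gmap_ne _ _ _ h1] at h
      exact absurd h (Fin.succAbove_ne k _)
    · rw [Gmap_ne _ _ _ h1, Gmap_ne _ _ _ h2] at h
      have h3 := congrArg (up m) (hT'.1.1 (Fin.succAbove_right_injective h))
      rwa [up_down _ _ h1, up_down _ _ h2] at h3
  · intro v
    by_cases hv : v = k
    · exact ⟨sp m, by rw [Gmap_sp, hv]⟩
    · obtain ⟨j, hj⟩ := Fin.exists_succAbove_eq hv
      obtain ⟨b, hb⟩ := hT'.1.2 j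
      exact ⟨up m b, by rw [Gmap_ne _ _ _ (up_ne_sp m b), down_up, hb, hj]⟩
  · intro c c' h1 h2
    have hc' : c' ≠ sp m := by
      intro h
      have : (c' : Fin (m+2) × ℕ).2 = 0 := by rw [h]; rfl
      omega
    have hc : c ≠ sp m := by
      intro h
      have hr : (c : Fin (m+2) × ℕ).1.1 = m + 1 := by rw [h]; rfl
      have h3 := (row_lt m c' hc').1
      have h4 := congrArg Fin.val h1
      omega
    rw [Gmap_ne _ _ _ hc, Gmap_ne _ _ _ hc', Fin.succAbove_lt_succAbove_iff]
    apply hT'.2.1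
    · apply Fin.ext
      have h4 := congrArg Fin.val h1
      simp only [down] at h4 ⊢
      omega
    · have h5 := (row_lt m c hc).2
      simp only [down]
      omega
  · intro c c' h1 h2
    have h2' : (c : Fin (m+2) × ℕ).1.1 < (c' : Fin (m+2) × ℕ).1.1 := h2
    have hc : c ≠ sp m := by
      intro h
      have hr : (c : Fin (m+2) × ℕ).1.1 = m + 1 := by rw [h]; rfl
      have := (c' : Fin (m+2) × ℕ).1.2
      omega
    have hc' : c' ≠ sp m := by
      intro h
      have : (c' : Fin (m+2) × ℕ).2 = 0 := by rw [h]; rfl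
      have := (row_lt m c hc).2
      omega
    rw [Gmap_ne _ _ _ hc, Gmap_ne _ _ _ hc', Fin.succAbove_lt_succAbove_iff]
    apply hT'.2.2
    · simp only [down]
      omega
    · show (down m c).1.1.1 < (down m c').1.1.1
      have := (row_lt m c hc).1
      have := (row_lt m c' hc').1
      simp only [down]
      omega

def mainEquiv (m N : ℕ) :
    {T : ↥(Am m) → Fin (N+1) // Cond (Am m) T} ≃
      Fin (N+1) × {T' : ↥(Bm m) → Fin N // Cond (Bm m) T'} where
  toFun := fun x => ⟨x.1 (sp m), ⟨Fmap x.1 x.2.1.1, cond_Fmap x.1 x.2⟩⟩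
  invFun := fun y => ⟨Gmap y.1 y.2.1, cond_Gmap y.1 y.2.1 y.2.2⟩
  left_inv := by
    rintro ⟨T, hT⟩
    apply Subtype.ext
    funext a
    show Gmap (T (sp m)) (Fmap T hT.1.1) a = T a
    by_cases h : a = sp m
    · rw [h]; exact Gmap_sp _ _
    · rw [Gmap_ne _ _ _ h, Fmap_succAbove, up_down m a h]
  right_inv := by
    rintro ⟨k, T', hT'⟩
    refine Prod.ext ?_ ?_
    · exact Gmap_sp _ _
    · apply Subtype.ext
      funext b
      apply Fin.succAbove_right_injective (p := Gmap k T' (sp m))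
      rw [Fmap_succAbove, Gmap_ne _ _ _ (up_ne_sp m b), down_up, Gmap_sp]
lemma sum_sub_mul_two (k : ℕ) : (∑ i ∈ range k, (k - i)) * 2 = k * (k + 1) := by
  induction k with
  | zero => simp
  | succ k ih =>
    have h1 : ∑ i ∈ range (k+1), (k + 1 - i) = (∑ i ∈ range k, (k - i)) + (k + 1) := by
      rw [Finset.sum_range_succ]
      have h2 : ∑ i ∈ range k, (k + 1 - i) = ∑ i ∈ range k, ((k - i) + 1) :=
        Finset.sum_congr rfl (fun i hi => by have := Finset.mem_range.1 hi; omega)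
      rw [h2, Finset.sum_add_distrib, Finset.sum_const, card_range, smul_eq_mul, mul_one]
      omega
    have h3 : (k + 1) * (k + 1 + 1) = k * (k + 1) + 2 * (k + 1) := by ring
    rw [h1]
    omega

lemma choose_two_mul_two (k : ℕ) : k.choose 2 * 2 = k * (k - 1) := by
  induction k with
  | zero => rfl
  | succ k ih =>
    rw [Nat.choose_succ_succ, Nat.choose_one_right]
    have ih' : k.choose (Nat.succ 1) * 2 = k * (k - 1) := ih
    have h : (k + 1) * (k + 1 - 1) = k * (k - 1) + 2 * k := by
      cases k with
      | zero => rfl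
      | succ l =>
        have h1 : l + 1 + 1 - 1 = l + 1 := rfl
        have h2 : l + 1 - 1 = l := rfl
        rw [h1, h2]; ring
    omega

lemma sum_staircase (m : ℕ) : (∑ i : Fin (m+1), (m + 1 - (i : ℕ))) = (m+2).choose 2 := by
  have e0 : (∑ i : Fin (m+1), (m + 1 - (i : ℕ))) = ∑ i ∈ range (m+1), (m + 1 - i) :=
    Fin.sum_univ_eq_sum_range _ _
  have e1 := sum_sub_mul_two (m+1)
  have e2 := choose_two_mul_two (m+2)
  have e3 : (m + 2) * (m + 2 - 1) = (m + 1) * (m + 1 + 1) := by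
    have h : m + 2 - 1 = m + 1 := rfl
    rw [h]; ring
  omega

lemma sum_Am (m : ℕ) :
    (∑ i : Fin (m+2), ((m + 2 - (i : ℕ)) - if (i : ℕ) < m + 1 then 1 else 0)) =
      (m+2).choose 2 + 1 := by
  rw [Fin.sum_univ_castSucc]
  have h1 : ∀ i : Fin (m+1),
      ((m + 2 - ((i.castSucc : Fin (m+2)) : ℕ)) -
        if ((i.castSucc : Fin (m+2)) : ℕ) < m + 1 then 1 else 0) = m + 1 - (i : ℕ) := by
    intro i
    have hi := i.2
    rw [Fin.coe_castSucc, if_pos hi]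
    omega
  rw [Finset.sum_congr rfl (fun i _ => h1 i)]
  have h2 : ((m + 2 - ((Fin.last (m+1) : Fin (m+2)) : ℕ)) -
      if ((Fin.last (m+1) : Fin (m+2)) : ℕ) < m + 1 then 1 else 0) = 1 := by
    rw [Fin.val_last, if_neg (lt_irrefl _)]
    omega
  rw [h2, sum_staircase]

end Stmt15

/-- with `ρ_n = (n, n−1, …, 2, 1)` and `(1^{n−1})` the single-column
partition with `n−1` boxes: `f^{ρ_n/(1^{n−1})} = (C(n,2)+1) · f^{(n−1, n−2, …, 1)}`. -/
theorem stmt_15 (n : ℕ) (hn : 2 ≤ n) :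
    fSkew n (fun i => n - (i : ℕ)) (fun i => if (i : ℕ) < n - 1 then 1 else 0) =
      (n.choose 2 + 1) * fSkew (n - 1) (fun i => n - 1 - (i : ℕ)) (fun _ => 0) := by
  classical
  obtain ⟨m, rfl⟩ : ∃ m, n = m + 2 := ⟨n - 2, by omega⟩
  show fSkew (m+2) (fun i => m + 2 - (i : ℕ)) (fun i => if (i : ℕ) < m + 1 then 1 else 0) =
      ((m+2).choose 2 + 1) * fSkew (m+1) (fun i => m + 1 - (i : ℕ)) (fun _ => 0)
  unfold fSkew
  rw [Stmt15.sum_Am m]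
  beta_reduce
  rw [show (∑ i : Fin (m+1), (m + 1 - (i : ℕ) - 0)) = (m+2).choose 2 from by
    simp only [Nat.sub_zero]; exact Stmt15.sum_staircase m]
  rw [Fintype.card_eq_nat_card, Fintype.card_eq_nat_card]
  have h := Nat.card_congr (Stmt15.mainEquiv m ((m+2).choose 2))
  rw [Nat.card_prod] at h
  rw [Nat.card_eq_of_equiv_fin (Equiv.refl (Fin ((m+2).choose 2 + 1)))] at h
  exact h


end
end
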